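/- If α + 1 < θ₁ and 0 < ξ < ρ·ω, then α + ξ < θ₁, κ_{α+ξ} = max₁(κ_α) + ξ, and max₁(κ_{α+ξ}) = κ_{α+ξ} (here max₁(κ_α) is an ordinal since α + 1 < θ₁). -/

import Mathlib

open Ordinal Set

/-- `ρ` is additively indecomposable: nonzero and closed under addition. -/
def AddIndec (ρ : Ordinal) : Prop :=
  ρ ≠ 0 ∧ ∀ ξ < ρ, ∀ η < ρ, ξ + η < ρ

/-- `σ` is divisible by `ρ`, i.e. of the form `ρ·ζ`. -/
def DivBy (ρ σ : Ordinal) : Prop := ∃ ζ : Ordinal, σ = ρ * ζ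

/-- The function `f_ξ` of the structure `R^ρ`. -/
noncomputable def fApp (ρ ξ α : Ordinal) : Ordinal :=
  if α % ρ = 0 then α + ξ else ρ * (α / ρ)

/-- A set of ordinals is closed (with respect to `R^ρ`). -/
def RClosed (ρ : Ordinal) (X : Set Ordinal) : Prop :=
  ∀ σ ξ : Ordinal, DivBy ρ σ → ξ < ρ → σ + ξ ∈ X → σ ∈ X

/-- `h` is an embedding of `X` (as a substructure of `R^ρ`) into `R^ρ`. -/
def IsEmbed (ρ : Ordinal) (X : Set Ordinal) (h : Ordinal → Ordinal) : Prop :=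
  (∀ α ∈ X, ∀ β ∈ X, α < β → h α < h β) ∧
  (∀ α ∈ X, ∀ β ∈ X, ∀ ξ, ξ < ρ → (fApp ρ ξ α = β ↔ fApp ρ ξ (h α) = h β))

/-- `Y` is a covering of `Z` (relative to relations `le1`, `le2`). -/
def IsCovering (ρ : Ordinal) (le1 le2 : Ordinal → Ordinal → Prop)
    (Z Y : Set Ordinal) : Prop :=
  ∃ h : Ordinal → Ordinal, IsEmbed ρ Z h ∧
    (∀ σ ∈ Z, ∀ τ ∈ Z, (le1 σ τ → le1 (h σ) (h τ)) ∧ (le2 σ τ → le2 (h σ) (h τ))) ∧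
    h '' Z = Y

/-- The `i`-th element of a finite set of ordinals, in increasing order. -/
noncomputable def nth (Y : Finset Ordinal) (i : ℕ) : Ordinal :=
  (Y.sort (· ≤ ·)).getD i 0

/-- There are cofinally many finite sets `Ỹ` below `α` with property `P`. -/
def Cofinally (α : Ordinal) (P : Finset Ordinal → Prop) : Prop :=
  ∀ α' < α, ∃ Yt : Finset Ordinal, (∀ y ∈ Yt, α' < y ∧ y < α) ∧ P Yt

/-- The defining condition for `α ≤₁ β`. -/
def Le1Def (ρ : Ordinal) (le1 le2 : Ordinal → Ordinal → Prop) (α β : Ordinal) : Prop :=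
  α ≤ β ∧
  ∀ X Y : Finset Ordinal, (∀ x ∈ X, x < α) → (∀ y ∈ Y, α ≤ y ∧ y < β) →
    RClosed ρ (↑(X ∪ Y) : Set Ordinal) →
    ∃ Yt : Finset Ordinal, (∀ y ∈ Yt, y < α) ∧ (∀ x ∈ X, ∀ y ∈ Yt, x < y) ∧
      IsCovering ρ le1 le2 (↑(X ∪ Y) : Set Ordinal) (↑(X ∪ Yt) : Set Ordinal)

/-- The defining condition for `α ≤₂ β`. -/
def Le2Def (ρ : Ordinal) (le1 le2 : Ordinal → Ordinal → Prop) (α β : Ordinal) : Prop :=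
  α ≤ β ∧
  (∀ X Y : Finset Ordinal, (∀ x ∈ X, x < α) → (∀ y ∈ Y, y < α) →
    RClosed ρ (↑X : Set Ordinal) → RClosed ρ (↑Y : Set Ordinal) →
    (∀ x ∈ X, ∀ y ∈ Y, x < y) →
    Cofinally α (fun Yt => IsCovering ρ le1 le2 (↑(X ∪ Y) : Set Ordinal) (↑(X ∪ Yt) : Set Ordinal)) →
    Cofinally β (fun Yt => IsCovering ρ le1 le2 (↑(X ∪ Y) : Set Ordinal) (↑(X ∪ Yt) : Set Ordinal))) ∧
  (∀ X Y : Finset Ordinal, (∀ x ∈ X, x < α) → (∀ y ∈ Y, α ≤ y ∧ y < β) →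
    RClosed ρ (↑(X ∪ Y) : Set Ordinal) →
    ∃ Yt : Finset Ordinal, (∀ y ∈ Yt, y < α) ∧ (∀ x ∈ X, ∀ y ∈ Yt, x < y) ∧
      IsCovering ρ le1 le2 (↑(X ∪ Y) : Set Ordinal) (↑(X ∪ Yt) : Set Ordinal) ∧
      ∀ i : ℕ, i < Y.card → le1 (nth Y i) β → le1 (nth Yt i) α)

/-- `le1`, `le2` satisfy the recursive definitions of `≤₁` and `≤₂` of `R₂^ρ`. -/
def R2System (ρ : Ordinal) (le1 le2 : Ordinal → Ordinal → Prop) : Prop :=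
  (∀ α β, le1 α β ↔ Le1Def ρ le1 le2 α β) ∧
  (∀ α β, le2 α β ↔ Le2Def ρ le1 le2 α β)

/-- Isomorphism of two classes of ordinals as substructures of `R₂^ρ`. -/
def OrdIso (ρ : Ordinal) (le1 le2 : Ordinal → Ordinal → Prop) (A B : Set Ordinal) : Prop :=
  ∃ g : Ordinal → Ordinal, Set.BijOn g A B ∧
    (∀ σ ∈ A, ∀ τ ∈ A, (σ < τ ↔ g σ < g τ)) ∧
    (∀ σ ∈ A, ∀ τ ∈ A, ∀ ξ, ξ < ρ → (fApp ρ ξ σ = τ ↔ fApp ρ ξ (g σ) = g τ)) ∧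
    (∀ σ ∈ A, ∀ τ ∈ A, (le1 σ τ ↔ le1 (g σ) (g τ)) ∧ (le2 σ τ ↔ le2 (g σ) (g τ)))

/-- `κ` is `≤₁`-minimal. -/
def Min1 (le1 : Ordinal → Ordinal → Prop) (κ : Ordinal) : Prop :=
  ∀ ξ < κ, ¬ le1 ξ κ

/-- `(dom, f)` is the increasing enumeration of the class `S` of ordinals:
`dom` is a downward-closed class of indices and `f` restricted to `dom` is the
order isomorphism onto `S`. -/
def Enumerates (S : Set Ordinal) (dom : Ordinal → Prop) (f : Ordinal → Ordinal) : Prop :=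
  (∀ a b : Ordinal, dom a → b < a → dom b) ∧
  (∀ a b : Ordinal, dom b → a < b → f a < f b) ∧
  (∀ a : Ordinal, dom a → f a ∈ S) ∧
  (∀ x ∈ S, ∃ a, dom a ∧ f a = x)

/-- `l` is a limit point of the class `C` of ordinals. -/
def LimPt (C : Set Ordinal) (l : Ordinal) : Prop :=
  l ≠ 0 ∧ ∀ γ < l, ∃ δ ∈ C, γ < δ ∧ δ < l

/-- The class `C` of ordinals is topologically closed. -/
def TopClosed (C : Set Ordinal) : Prop := ∀ l, LimPt C l → l ∈ C

/-- The class `C` of ordinals is an interval. -/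
def IsInterval (C : Set Ordinal) : Prop :=
  ∀ σ τ υ : Ordinal, σ ∈ C → υ ∈ C → σ ≤ τ → τ ≤ υ → τ ∈ C

open Classical in
/-- The closure `J̄_ξ` of the `ξ`-th component of `I_α` with respect to `≤₂`,
given the enumeration `(dom₂, ν)` of the `≤₂`-minimal multiples of `κ_α` in `I_α`. -/
noncomputable def Jbar (le1 : Ordinal → Ordinal → Prop) (κα : Ordinal)
    (dom₂ : Ordinal → Prop) (ν : Ordinal → Ordinal) (ξ : Ordinal) : Set Ordinal :=
  if dom₂ (ξ + 1) then Set.Icc (ν ξ) (ν (ξ + 1))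
  else {δ | le1 κα δ} ∩ Set.Ici (ν ξ)

namespace KappaAux

lemma div_mod_unique {p ζ ξ τ : Ordinal} (hp : p ≠ 0) (hξ : ξ < p) (h : p * ζ + ξ = τ) :
    τ / p = ζ ∧ τ % p = ξ := by
  have h1 : p * ζ ≤ τ := h ▸ (le_self_add : p * ζ ≤ p * ζ + ξ)
  have h2 : τ < p * (ζ + 1) := by
    rw [mul_add, mul_one]
    exact h ▸ add_lt_add_right hξ _
  have hd : τ / p = ζ := by
    refine le_antisymm ?_ ((Ordinal.le_div hp).mpr h1)
    have := (Ordinal.div_lt hp).mpr h2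
    rwa [Ordinal.add_one_eq_succ, Order.lt_succ_iff] at this
  refine ⟨hd, ?_⟩
  have := Ordinal.div_add_mod τ p
  rw [hd] at this
  rw [← this] at h
  exact ((add_right_inj _).mp h).symm

lemma div_self_of_mod_eq_zero {p τ : Ordinal} (h : τ % p = 0) : p * (τ / p) = τ := by
  have := Ordinal.div_add_mod τ p
  rwa [h, add_zero] at this

lemma divBy_iff_mod {ρ σ : Ordinal} (hρ : ρ ≠ 0) : DivBy ρ σ ↔ σ % ρ = 0 := by
  constructor
  · rintro ⟨ζ, rfl⟩
    exact (div_mod_unique hρ (pos_iff_ne_zero.mpr hρ) (add_zero _)).2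
  · intro h
    exact ⟨σ / ρ, (div_self_of_mod_eq_zero h).symm⟩

lemma mod_of_add {ρ σ ξ : Ordinal} (hρ : ρ ≠ 0) (hσ : σ % ρ = 0) (hξ : ξ < ρ) :
    (σ + ξ) % ρ = ξ ∧ ρ * ((σ + ξ) / ρ) = σ := by
  have h := div_mod_unique (ζ := σ / ρ) hρ hξ (by rw [div_self_of_mod_eq_zero hσ])
  exact ⟨h.2, by rw [h.1, div_self_of_mod_eq_zero hσ]⟩

lemma fApp_of_div {ρ ξ σ : Ordinal} (h : σ % ρ = 0) : fApp ρ ξ σ = σ + ξ := if_pos h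

lemma fApp_zero_iff {ρ x : Ordinal} : fApp ρ 0 x = x ↔ x % ρ = 0 := by
  constructor
  · intro h
    by_contra hx
    rw [fApp, if_neg hx] at h
    have h2 := Ordinal.div_add_mod x ρ
    rw [h] at h2
    conv_rhs at h2 => rw [← add_zero x]
    exact hx ((add_right_inj _).mp h2)
  · intro h; rw [fApp_of_div h, add_zero]

lemma fApp_base {ρ τ : Ordinal} (h : τ % ρ ≠ 0) :
    fApp ρ (τ % ρ) (ρ * (τ / ρ)) = τ := by
  have hb : (ρ * (τ / ρ)) % ρ = 0 := by
    rcases eq_or_ne ρ 0 with rfl | hρ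
    · simp
    · exact (div_mod_unique hρ (pos_iff_ne_zero.mpr hρ) (add_zero _)).2
  rw [fApp_of_div hb, Ordinal.div_add_mod]

section Sys
variable {ρ : Ordinal} {le1 le2 : Ordinal → Ordinal → Prop}

lemma id_covering (Z : Set Ordinal) : IsCovering ρ le1 le2 Z Z :=
  ⟨id, ⟨fun _ _ _ _ h => h, fun _ _ _ _ _ _ => Iff.rfl⟩, fun _ _ _ _ => ⟨id, id⟩, Set.image_id Z⟩

lemma le1_refl (hsys : R2System ρ le1 le2) (a : Ordinal) : le1 a a := by
  refine (hsys.1 a a).mpr ⟨le_rfl, ?_⟩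
  intro X Y hX hY _
  have hYe : Y = ∅ := Finset.eq_empty_of_forall_notMem fun y hy =>
    absurd (hY y hy).1 (not_le.mpr (hY y hy).2)
  subst hYe
  refine ⟨∅, by simp, by simp, ?_⟩
  rw [Finset.union_empty]
  exact id_covering _

lemma le1_le (hsys : R2System ρ le1 le2) {a b : Ordinal} (h : le1 a b) : a ≤ b :=
  ((hsys.1 a b).mp h).1

lemma le1_interval (hsys : R2System ρ le1 le2) {a b c : Ordinal}
    (h : le1 a b) (hac : a ≤ c) (hcb : c ≤ b) : le1 a c := by
  refine (hsys.1 a c).mpr ⟨hac, ?_⟩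
  intro X Y hX hY hcl
  exact ((hsys.1 a b).mp h).2 X Y hX
    (fun y hy => ⟨(hY y hy).1, lt_of_lt_of_le (hY y hy).2 hcb⟩) hcl

lemma rclosed_of_forall_div {ρ : Ordinal} (hρ : ρ ≠ 0) (X : Set Ordinal)
    (h : ∀ x ∈ X, x % ρ = 0) : RClosed ρ X := by
  intro σ ξ hdiv hξ hmem
  have hσ : σ % ρ = 0 := (divBy_iff_mod hρ).mp hdiv
  have := (mod_of_add hρ hσ hξ).1
  rw [h _ hmem] at this
  subst this
  rwa [add_zero] at hmem

/-- Extract a two-point covering: `h` fixes `x₀` and moves `a` to some `δ ∈ (x₀, a)`. -/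
lemma cover_pair (hsys : R2System ρ le1 le2) {a b x₀ : Ordinal} (h : le1 a b) (hab : a < b)
    (hx : x₀ < a) (hcl : RClosed ρ (↑({x₀} ∪ {a} : Finset Ordinal) : Set Ordinal)) :
    ∃ (δ : Ordinal) (h' : Ordinal → Ordinal), x₀ < δ ∧ δ < a ∧
      IsEmbed ρ (↑({x₀} ∪ {a} : Finset Ordinal) : Set Ordinal) h' ∧ h' x₀ = x₀ ∧ h' a = δ := by
  obtain ⟨Yt, hYt, hXYt, h', emb, _, img⟩ :=
    ((hsys.1 a b).mp h).2 {x₀} {a} (by simpa using hx) (by simp [le_of_lt hab, hab]) hcl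
  have hZ : (↑({x₀} ∪ {a} : Finset Ordinal) : Set Ordinal) = {x₀, a} := by ext z; simp [or_comm]
  have himg : h' '' {x₀, a} = (↑({x₀} ∪ Yt : Finset Ordinal) : Set Ordinal) := by
    rw [← hZ]; exact img
  rw [Set.image_pair] at himg
  have hx₀mem : x₀ ∈ ({h' x₀, h' a} : Set Ordinal) := by
    rw [himg]; simp
  have hmono : h' x₀ < h' a := by
    refine emb.1 x₀ ?_ a ?_ hx <;> rw [hZ] <;> simp
  have hhx₀ : h' x₀ ∈ ({x₀} ∪ Yt : Finset Ordinal) := by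
    have : h' x₀ ∈ ({h' x₀, h' a} : Set Ordinal) := by simp
    rw [himg] at this; exact_mod_cast this
  have hha : h' a ∈ ({x₀} ∪ Yt : Finset Ordinal) := by
    have : h' a ∈ ({h' x₀, h' a} : Set Ordinal) := by simp
    rw [himg] at this; exact_mod_cast this
  have hfix : h' x₀ = x₀ := by
    rcases hx₀mem with h1 | h1
    · exact h1.symm
    · exfalso
      have hlt : h' x₀ < x₀ := h1 ▸ hmono
      rcases Finset.mem_union.mp hhx₀ with h2 | h2
      · simp at h2; exact absurd (h2 ▸ hlt) (lt_irrefl _)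
      · exact absurd (hXYt x₀ (by simp) _ h2) (not_lt.mpr hlt.le)
  have hhaYt : h' a ∈ Yt := by
    rcases Finset.mem_union.mp hha with h2 | h2
    · simp at h2
      rw [h2] at hmono; rw [hfix] at hmono; exact absurd hmono (lt_irrefl _)
    · exact h2
  refine ⟨h' a, h', ?_, hYt _ hhaYt, by rw [hZ] at emb ⊢; exact emb, hfix, rfl⟩
  exact hXYt x₀ (by simp) _ hhaYt

lemma le1_lt_dvd (hsys : R2System ρ le1 le2) (hρ : AddIndec ρ) {a b : Ordinal}
    (h : le1 a b) (hab : a < b) : ∃ c, a = ρ * ω * c := by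
  have hρ0 : ρ ≠ 0 := hρ.1
  have hρpos : 0 < ρ := pos_iff_ne_zero.mpr hρ0
  -- a ≠ 0
  have ha0 : a ≠ 0 := by
    rintro rfl
    have hcl0 : RClosed ρ (↑((∅ : Finset Ordinal) ∪ {0}) : Set Ordinal) := by
      intro σ ξ _ _ hmem
      simp only [Finset.empty_union, Finset.coe_singleton, Set.mem_singleton_iff] at hmem ⊢
      exact nonpos_iff_eq_zero.mp (hmem ▸ (le_self_add : σ ≤ σ + ξ))
    obtain ⟨Yt, hYt, _, h', _, _, img⟩ :=
      ((hsys.1 0 b).mp h).2 ∅ {0} (by simp) (by simp [hab]) hcl0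
    have hmem : h' 0 ∈ h' '' (↑((∅ : Finset Ordinal) ∪ {0}) : Set Ordinal) := ⟨0, by simp, rfl⟩
    rw [img] at hmem
    have hYte : Yt = ∅ := Finset.eq_empty_of_forall_notMem fun y hy => by
      exact absurd (hYt y hy) (not_lt.mpr zero_le)
    simp [hYte] at hmem
  -- a is divisible by ρ
  have hmoda : a % ρ = 0 := by
    by_contra hmod
    set x₀ := ρ * (a / ρ) with hx₀def
    have hxa : x₀ + a % ρ = a := Ordinal.div_add_mod a ρ
    have hx : x₀ < a := by
      rw [← hxa]
      nth_rewrite 1 [← add_zero x₀]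
      exact add_lt_add_right (pos_iff_ne_zero.mpr hmod) x₀
    have hcl : RClosed ρ (↑({x₀} ∪ {a} : Finset Ordinal) : Set Ordinal) := by
      intro σ ξ hdiv hξ hmem
      have hσ : σ % ρ = 0 := (divBy_iff_mod hρ0).mp hdiv
      have hbase : ρ * ((σ + ξ) / ρ) = σ := (mod_of_add hρ0 hσ hξ).2
      have hx₀div : x₀ / ρ = a / ρ :=
        (div_mod_unique hρ0 hρpos (add_zero x₀)).1
      simp only [Finset.coe_union, Finset.coe_singleton, Set.mem_union,
        Set.mem_singleton_iff] at hmem ⊢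
      left
      rcases hmem with h1 | h1
      · rw [h1, hx₀div] at hbase; exact hbase.symm
      · rw [h1] at hbase; exact hbase.symm
    obtain ⟨δ, h', hx₀δ, hδa, emb, hfix, hha⟩ := cover_pair hsys h hab hx hcl
    have hmemx₀ : x₀ ∈ (↑({x₀} ∪ {a} : Finset Ordinal) : Set Ordinal) := by simp
    have hmema : a ∈ (↑({x₀} ∪ {a} : Finset Ordinal) : Set Ordinal) := by simp
    have hrefl := emb.2 x₀ hmemx₀ a hmema (a % ρ) (Ordinal.mod_lt a hρ0)
    rw [hfix, hha] at hrefl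
    have : fApp ρ (a % ρ) x₀ = δ := hrefl.mp (fApp_base hmod)
    rw [fApp_base hmod] at this
    exact absurd (this ▸ hδa) (lt_irrefl _)
  -- the quotient is a limit
  have haζ : a = ρ * (a / ρ) := (div_self_of_mod_eq_zero hmoda).symm
  rcases Ordinal.zero_or_succ_or_isSuccLimit (a / ρ) with hzero | ⟨d, hd⟩ | hlim
  · rw [hzero, mul_zero] at haζ; exact absurd haζ ha0
  · exfalso
    set x₀ := ρ * d with hx₀def
    have ha : a = x₀ + ρ := by rw [haζ, ← hd, mul_succ]
    have hx : x₀ < a := by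
      rw [ha]; nth_rewrite 1 [← add_zero x₀]; exact add_lt_add_right hρpos x₀
    have hcl : RClosed ρ (↑({x₀} ∪ {a} : Finset Ordinal) : Set Ordinal) := by
      refine rclosed_of_forall_div hρ0 _ ?_
      intro x hxmem
      simp only [Finset.coe_union, Finset.coe_singleton, Set.mem_union,
        Set.mem_singleton_iff] at hxmem
      rcases hxmem with rfl | rfl
      · exact (divBy_iff_mod hρ0).mp ⟨d, rfl⟩
      · exact hmoda
    obtain ⟨δ, h', hx₀δ, hδa, emb, hfix, hha⟩ := cover_pair hsys h hab hx hcl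
    have hmema : a ∈ (↑({x₀} ∪ {a} : Finset Ordinal) : Set Ordinal) := by simp
    have hrefl := emb.2 a hmema a hmema 0 hρpos
    rw [hha] at hrefl
    have hδdiv : δ % ρ = 0 := fApp_zero_iff.mp (hrefl.mp (fApp_zero_iff.mpr hmoda))
    have hδeq : ρ * (δ / ρ) = δ := div_self_of_mod_eq_zero hδdiv
    have h1 : d < δ / ρ := by
      rw [← mul_lt_mul_iff_right₀ hρpos, hδeq]; exact hx₀δ
    have h2 : δ / ρ < Order.succ d := by
      rw [← mul_lt_mul_iff_right₀ hρpos, hδeq, hd, ← haζ]; exact hδa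
    exact absurd (Order.lt_succ_iff.mp h2) (not_le.mpr h1)
  · obtain ⟨c, hc⟩ := (Ordinal.isSuccLimit_iff_omega0_dvd.mp hlim).2
    exact ⟨c, by rw [haζ, hc, mul_assoc]⟩

lemma rclosed_image {ρ : Ordinal} (hρ : ρ ≠ 0) {Z : Set Ordinal} {h : Ordinal → Ordinal}
    (hcl : RClosed ρ Z) (emb : IsEmbed ρ Z h) : RClosed ρ (h '' Z) := by
  have hρpos : 0 < ρ := pos_iff_ne_zero.mpr hρ
  rintro σ ξ hdiv hξ ⟨τ, hτZ, hτ⟩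
  rcases eq_or_ne ξ 0 with rfl | hξ0
  · exact ⟨τ, hτZ, by rw [hτ, add_zero]⟩
  · have hσ : σ % ρ = 0 := (divBy_iff_mod hρ).mp hdiv
    have hmodhτ : (h τ) % ρ = ξ := by rw [hτ]; exact (mod_of_add hρ hσ hξ).1
    have hbasehτ : ρ * (h τ / ρ) = σ := by rw [hτ]; exact (mod_of_add hρ hσ hξ).2
    have hτmod : τ % ρ ≠ 0 := by
      intro hτ0
      have h1 := (emb.2 τ hτZ τ hτZ 0 hρpos).mp (fApp_zero_iff.mpr hτ0)
      rw [fApp_zero_iff] at h1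
      rw [h1] at hmodhτ
      exact hξ0 hmodhτ.symm
    have hbτZ : ρ * (τ / ρ) ∈ Z := by
      refine hcl (ρ * (τ / ρ)) (τ % ρ) ⟨τ / ρ, rfl⟩ (Ordinal.mod_lt τ hρ) ?_
      rw [Ordinal.div_add_mod]; exact hτZ
    have hbdiv : (ρ * (τ / ρ)) % ρ = 0 := (divBy_iff_mod hρ).mp ⟨_, rfl⟩
    have hhb : h (ρ * (τ / ρ)) % ρ = 0 :=
      fApp_zero_iff.mp ((emb.2 _ hbτZ _ hbτZ 0 hρpos).mp (fApp_zero_iff.mpr hbdiv))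
    have hchain := (emb.2 _ hbτZ τ hτZ (τ % ρ) (Ordinal.mod_lt τ hρ)).mp (fApp_base hτmod)
    rw [fApp_of_div hhb] at hchain
    have h2 : ρ * (h τ / ρ) = h (ρ * (τ / ρ)) := by
      rw [← hchain]; exact (mod_of_add hρ hhb (Ordinal.mod_lt τ hρ)).2
    exact ⟨_, hbτZ, by rw [← h2]; exact hbasehτ⟩

open Classical in
lemma le1_trans (hsys : R2System ρ le1 le2) (hρ : AddIndec ρ) {a b c : Ordinal}
    (hab : le1 a b) (hbc : le1 b c) : le1 a c := by
  refine (hsys.1 a c).mpr ⟨(le1_le hsys hab).trans (le1_le hsys hbc), ?_⟩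
  intro X Y hX hY hcl
  set Y₁ := Y.filter (fun y => y < b) with hY₁def
  set Y₂ := Y.filter (fun y => ¬ y < b) with hY₂def
  have hYsplit : Y₁ ∪ Y₂ = Y := Finset.filter_union_filter_not_eq _ Y
  have hunion1 : X ∪ Y₁ ∪ Y₂ = X ∪ Y := by rw [Finset.union_assoc, hYsplit]
  have hdomeq : (↑(X ∪ Y₁ ∪ Y₂) : Set Ordinal) = ↑(X ∪ Y) := by rw [hunion1]
  obtain ⟨Yt₂, hYt₂b, hXYt₂, h₂, emb₂, pres₂, img₂⟩ := ((hsys.1 b c).mp hbc).2 (X ∪ Y₁) Y₂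
    (fun x hx => by
      rcases Finset.mem_union.mp hx with h1 | h1
      · exact lt_of_lt_of_le (hX x h1) (le1_le hsys hab)
      · exact (Finset.mem_filter.mp h1).2)
    (fun y hy => ⟨not_lt.mp (Finset.mem_filter.mp hy).2, (hY y (Finset.mem_filter.mp hy).1).2⟩)
    (by rw [show ((X ∪ Y₁) ∪ Y₂ : Finset Ordinal) = X ∪ Y from hunion1]; exact hcl)
  rw [show ((X ∪ Y₁) ∪ Y₂ : Finset Ordinal) = X ∪ Y from hunion1] at emb₂ pres₂ img₂
  -- second application
  set W := Y₁ ∪ Yt₂ with hWdef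
  set X'' := X ∪ W.filter (fun y => y < a) with hX''def
  set Y'' := W.filter (fun y => ¬ y < a) with hY''def
  have hu2 : X'' ∪ Y'' = (X ∪ Y₁) ∪ Yt₂ := by
    rw [hX''def, hY''def, Finset.union_assoc, Finset.filter_union_filter_not_eq, hWdef,
      Finset.union_assoc]
  have himg₂ : h₂ '' ↑(X ∪ Y) = (↑(X'' ∪ Y'') : Set Ordinal) := by
    rw [img₂]; exact (congrArg (fun s : Finset Ordinal => (↑s : Set Ordinal)) hu2).symm
  have hWlt : ∀ y ∈ W, y < b := by
    intro y hy
    rcases Finset.mem_union.mp hy with h1 | h1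
    · exact (Finset.mem_filter.mp h1).2
    · exact hYt₂b y h1
  have hcl'' : RClosed ρ (↑(X'' ∪ Y'') : Set Ordinal) := by
    rw [← himg₂]
    exact rclosed_image hρ.1 hcl emb₂
  obtain ⟨Yt, hYta, hX''Yt, h₁, emb₁, pres₁, img₁⟩ := ((hsys.1 a b).mp hab).2 X'' Y''
    (fun x hx => by
      rcases Finset.mem_union.mp hx with h1 | h1
      · exact hX x h1
      · exact (Finset.mem_filter.mp h1).2)
    (fun y hy => ⟨not_lt.mp (Finset.mem_filter.mp hy).2, hWlt y (Finset.mem_filter.mp hy).1⟩)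
    hcl''
  have hmem₂ : ∀ σ ∈ (↑(X ∪ Y) : Set Ordinal), h₂ σ ∈ (↑(X'' ∪ Y'') : Set Ordinal) := by
    intro σ hσ
    rw [← himg₂]
    exact ⟨σ, hσ, rfl⟩
  refine ⟨W.filter (fun y => y < a) ∪ Yt, ?_, ?_, ?_⟩
  · intro y hy
    rcases Finset.mem_union.mp hy with h1 | h1
    · exact (Finset.mem_filter.mp h1).2
    · exact hYta y h1
  · intro x hx y hy
    rcases Finset.mem_union.mp hy with h1 | h1
    · have h1' := Finset.mem_filter.mp h1
      rcases Finset.mem_union.mp h1'.1 with h2 | h2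
      · exact lt_of_lt_of_le (hX x hx) (hY y (Finset.mem_filter.mp h2).1).1
      · exact hXYt₂ x (Finset.mem_union_left _ hx) y h2
    · exact hX''Yt x (Finset.mem_union_left _ hx) y h1
  · refine ⟨h₁ ∘ h₂, ⟨?_, ?_⟩, ?_, ?_⟩
    · intro σ hσ τ hτ hlt
      exact emb₁.1 _ (hmem₂ σ hσ) _ (hmem₂ τ hτ) (emb₂.1 σ hσ τ hτ hlt)
    · intro σ hσ τ hτ ξ hξ
      exact (emb₂.2 σ hσ τ hτ ξ hξ).trans (emb₁.2 _ (hmem₂ σ hσ) _ (hmem₂ τ hτ) ξ hξ)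
    · intro σ hσ τ hτ
      constructor
      · intro H
        exact (pres₁ _ (hmem₂ σ hσ) _ (hmem₂ τ hτ)).1 ((pres₂ σ hσ τ hτ).1 H)
      · intro H
        exact (pres₁ _ (hmem₂ σ hσ) _ (hmem₂ τ hτ)).2 ((pres₂ σ hσ τ hτ).2 H)
    · rw [Set.image_comp, himg₂, img₁]
      exact congrArg (fun s : Finset Ordinal => (↑s : Set Ordinal)) (by rw [Finset.union_assoc])

lemma isGreatest_le1 (hsys : R2System ρ le1 le2) {a B : Ordinal}
    (hbd : ∀ δ, le1 a δ → δ < B) :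
    IsGreatest {δ | le1 a δ} (sSup {δ | le1 a δ}) := by
  have hne : {δ | le1 a δ}.Nonempty := ⟨a, le1_refl hsys a⟩
  have hbdd : BddAbove {δ | le1 a δ} := ⟨B, fun δ hδ => (hbd δ hδ).le⟩
  have ham : a ≤ sSup {δ | le1 a δ} := le_csSup hbdd (le1_refl hsys a)
  have hmem : le1 a (sSup {δ | le1 a δ}) := by
    refine (hsys.1 a _).mpr ⟨ham, ?_⟩
    intro X Y hX hY hcl
    rcases Y.eq_empty_or_nonempty with rfl | hYne
    · refine ⟨∅, by simp, by simp, ?_⟩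
      rw [Finset.union_empty]; exact id_covering _
    · have hmax : Y.max' hYne < sSup {δ | le1 a δ} := (hY _ (Y.max'_mem hYne)).2
      obtain ⟨δ, hδS, hδgt⟩ := exists_lt_of_lt_csSup hne hmax
      exact ((hsys.1 a δ).mp hδS).2 X Y hX
        (fun y hy => ⟨(hY y hy).1, lt_of_le_of_lt (Finset.le_max' Y y hy) hδgt⟩) hcl
  exact ⟨hmem, fun δ hδ => le_csSup hbdd hδ⟩

end Sys

lemma rho_omega_indec {ρ : Ordinal} (hρ : AddIndec ρ) :
    ∀ x < ρ * ω, ∀ y < ρ * ω, x + y < ρ * ω := by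
  intro x hx y hy
  obtain ⟨n, hn, hxn⟩ := (lt_mul_iff_of_isSuccLimit isSuccLimit_omega0).mp hx
  obtain ⟨k, hk, hyk⟩ := (lt_mul_iff_of_isSuccLimit isSuccLimit_omega0).mp hy
  have h1 : x + y < ρ * n + ρ * k :=
    lt_of_lt_of_le (add_lt_add_right hyk x) (add_le_add_left hxn.le _)
  rw [← mul_add] at h1
  refine h1.trans_le (mul_le_mul_right ?_ ρ)
  obtain ⟨n', rfl⟩ := lt_omega0.mp hn
  obtain ⟨k', rfl⟩ := lt_omega0.mp hk
  rw [← Nat.cast_add]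
  exact (nat_lt_omega0 _).le

lemma not_dvd_add_small {ρ : Ordinal} (hρ : AddIndec ρ) {m η : Ordinal}
    (h0 : 0 < η) (hη : η < ρ * ω) : ¬ ∃ c, m + η = ρ * ω * c := by
  have hρω : ρ * ω ≠ 0 := _root_.mul_ne_zero hρ.1 omega0_ne_zero
  have hr : m % (ρ * ω) < ρ * ω := Ordinal.mod_lt m hρω
  have hm : ρ * ω * (m / (ρ * ω)) + m % (ρ * ω) = m := Ordinal.div_add_mod m (ρ * ω)
  rintro ⟨c, hc⟩
  have h1 : ρ * ω * (m / (ρ * ω)) + (m % (ρ * ω) + η) = m + η := by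
    rw [← add_assoc, hm]
  have h2 := (div_mod_unique hρω (rho_omega_indec hρ _ hr _ hη) h1).2
  have h3 := (div_mod_unique hρω (pos_iff_ne_zero.mpr hρω)
    (add_zero (ρ * ω * c) ▸ hc.symm)).2
  rw [h2] at h3
  have : η ≤ 0 := h3 ▸ (le_add_self : η ≤ m % (ρ * ω) + η)
  exact absurd (nonpos_iff_eq_zero.mp this) h0.ne'

end KappaAux

theorem kappa_add_small_offsets
    (ρ : Ordinal) (hρ : AddIndec ρ)
    (le1 le2 : Ordinal → Ordinal → Prop) (hsys : R2System ρ le1 le2)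
    (dom : Ordinal → Prop) (κ : Ordinal → Ordinal)
    (henum : Enumerates {x | Min1 le1 x} dom κ)
    (α ξ : Ordinal) (hα : dom (α + 1)) (hξ0 : 0 < ξ) (hξ : ξ < ρ * ω) :
    dom (α + ξ) ∧
    (∃ m : Ordinal, IsGreatest {δ | le1 (κ α) δ} m ∧ κ (α + ξ) = m + ξ) ∧
    IsGreatest {δ | le1 (κ (α + ξ)) δ} (κ (α + ξ)) := by
  open KappaAux in
  have hdown := henum.1
  have hmonoS := henum.2.1
  have hminκ : ∀ a, dom a → Min1 le1 (κ a) := henum.2.2.1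
  have hsurj := henum.2.2.2
  have hmono' : ∀ {u v : Ordinal}, dom v → u ≤ v → κ u ≤ κ v := by
    intro u v hv huv
    rcases eq_or_lt_of_le huv with rfl | h
    · exact le_rfl
    · exact (hmonoS u v hv h).le
  have hdomα : dom α := hdown (α + 1) α hα
    (by rw [Ordinal.add_one_eq_succ]; exact Order.lt_succ α)
  have hκκ : κ α < κ (α + 1) := hmonoS α (α + 1) hα
    (by rw [Ordinal.add_one_eq_succ]; exact Order.lt_succ α)
  -- the class {δ | κ α ≤₁ δ} is bounded, so it has a greatest element M
  have hbd : ∀ δ, le1 (κ α) δ → δ < κ (α + 1) := by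
    intro δ hδ
    by_contra hge
    push_neg at hge
    exact hminκ (α + 1) hα (κ α) hκκ (le1_interval hsys hδ hκκ.le hge)
  set M := sSup {δ | le1 (κ α) δ} with hMdef
  have hM : IsGreatest {δ | le1 (κ α) δ} M := isGreatest_le1 hsys hbd
  have hκαM : κ α ≤ M := hM.2 (le1_refl hsys (κ α))
  have hgap : ∀ δ, κ α < δ → δ ≤ M → ¬ Min1 le1 δ := fun δ h1 h2 hmin =>
    hmin (κ α) h1 (le1_interval hsys hM.1 h1.le h2)
  -- every M + ξ' with 0 < ξ' < ρ·ω is ≤₁-minimal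
  have hmin_new : ∀ ξ', 0 < ξ' → ξ' < ρ * ω → Min1 le1 (M + ξ') := by
    intro ξ' h0 hlt x hx hle
    have hMlt : M < M + ξ' := by
      nth_rewrite 1 [← add_zero M]
      exact add_lt_add_right h0 M
    rcases lt_trichotomy x (κ α) with hxκ | rfl | hxκ
    · exact hminκ α hdomα x hxκ
        (le1_interval hsys hle hxκ.le (hκαM.trans (le_self_add : M ≤ M + ξ')))
    · exact absurd (hM.2 hle) (not_le.mpr hMlt)
    · rcases le_or_gt x M with hxM | hMx
      · have h1 : le1 (κ α) x := le1_interval hsys hM.1 hxκ.le hxM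
        exact absurd (hM.2 (le1_trans hsys hρ h1 hle)) (not_le.mpr hMlt)
      · obtain ⟨c, hc⟩ := le1_lt_dvd hsys hρ hle hx
        refine not_dvd_add_small (m := M) (η := x - M) hρ ?_ ?_ ⟨c, ?_⟩
        · rw [pos_iff_ne_zero]
          intro h0'
          have h2 := Ordinal.add_sub_cancel_of_le hMx.le
          rw [h0', add_zero] at h2
          exact absurd h2.symm hMx.ne'
        · have h2 : M + (x - M) < M + ξ' := by
            rw [Ordinal.add_sub_cancel_of_le hMx.le]; exact hx
          exact ((add_lt_add_iff_left M).mp h2).trans hlt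
        · rw [Ordinal.add_sub_cancel_of_le hMx.le]; exact hc
  have hsuccpos : ∀ o : Ordinal, 0 < Order.succ o := fun o =>
    (zero_le : (0 : Ordinal) ≤ o).trans_lt (Order.lt_succ o)
  -- enumeration bookkeeping
  have hP : ∀ ξ', 0 < ξ' → ξ' < ρ * ω → dom (α + ξ') ∧ κ (α + ξ') = M + ξ' := by
    intro ξ'
    induction ξ' using Ordinal.limitRecOn with
    | zero => exact fun h0 _ => absurd h0 (lt_irrefl 0)
    | add_one o ih =>
      rw [Ordinal.add_one_eq_succ]
      intro _ hlt
      have hoω : o < ρ * ω := (Order.lt_succ o).trans hlt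
      have hsucc : α + Order.succ o = Order.succ (α + o) := Ordinal.add_succ α o
      obtain ⟨aξ, hdomaξ, hκaξ⟩ := hsurj (M + Order.succ o)
        (hmin_new (Order.succ o) (hsuccpos o) hlt)
      have hprev : dom (α + o) ∧ κ (α + o) ≤ M + o := by
        rcases eq_or_ne o 0 with rfl | ho0
        · simpa using ⟨hdomα, hκαM⟩
        · obtain ⟨hd, he⟩ := ih (pos_iff_ne_zero.mpr ho0) hoω
          exact ⟨hd, he.le⟩
      have haξgt : α + o < aξ := by
        by_contra hle'
        push_neg at hle'
        have h1 := hmono' hprev.1 hle'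
        rw [hκaξ] at h1
        have h2 := h1.trans hprev.2
        exact absurd h2 (not_le.mpr (add_lt_add_right (Order.lt_succ o) M))
      have hsle : α + Order.succ o ≤ aξ := by
        rw [hsucc]; exact Order.succ_le_of_lt haξgt
      have hdomsucc : dom (α + Order.succ o) := by
        rcases eq_or_lt_of_le hsle with he | hl
        · rw [he]; exact hdomaξ
        · exact hdown _ _ hdomaξ hl
      refine ⟨hdomsucc, le_antisymm ?_ ?_⟩
      · have h1 := hmono' hdomaξ hsle
        rwa [hκaξ] at h1
      · have hlow : M + o < κ (α + Order.succ o) := by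
          have hκmono : κ (α + o) < κ (α + Order.succ o) :=
            hmonoS _ _ hdomsucc (add_lt_add_right (Order.lt_succ o) α)
          rcases eq_or_ne o 0 with rfl | ho0
          · rw [add_zero]
            by_contra hle'
            push_neg at hle'
            have hgt : κ α < κ (α + Order.succ 0) := by simpa using hκmono
            exact hgap _ hgt hle' (hminκ _ hdomsucc)
          · have he := (ih (pos_iff_ne_zero.mpr ho0) hoω).2
            rwa [he] at hκmono
        rw [Ordinal.add_succ]
        exact Order.succ_le_of_lt hlow
    | limit o holim ih =>
      intro h0 hlt
      obtain ⟨aξ, hdomaξ, hκaξ⟩ := hsurj (M + o) (hmin_new o h0 hlt)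
      have hstep : ∀ η, 0 < η → η < o → dom (α + η) ∧ κ (α + η) = M + η :=
        fun η hη1 hη2 => ih η hη2 hη1 (hη2.trans hlt)
      have haξge : α + o ≤ aξ := by
        by_contra hlt'
        push_neg at hlt'
        obtain ⟨η, hηo, haξη⟩ := (lt_add_iff_of_isSuccLimit holim).mp hlt'
        have hηo' : Order.succ η < o := holim.succ_lt hηo
        have h1 := hstep (Order.succ η) (hsuccpos η) hηo'
        have h2 : aξ < α + Order.succ η :=
          haξη.trans (add_lt_add_right (Order.lt_succ η) α)
        have h3 := hmonoS aξ (α + Order.succ η) h1.1 h2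
        rw [hκaξ, h1.2] at h3
        exact absurd ((add_lt_add_iff_left M).mp h3) (not_lt.mpr hηo'.le)
      have hdomo : dom (α + o) := by
        rcases eq_or_lt_of_le haξge with he | hl
        · rw [he]; exact hdomaξ
        · exact hdown _ _ hdomaξ hl
      refine ⟨hdomo, le_antisymm ?_ ?_⟩
      · have h1 := hmono' hdomaξ haξge
        rwa [hκaξ] at h1
      · by_contra hlt'
        push_neg at hlt'
        obtain ⟨η, hηo, hκη⟩ := (lt_add_iff_of_isSuccLimit holim).mp hlt'
        have hηo' : Order.succ η < o := holim.succ_lt hηo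
        have h1 := hstep (Order.succ η) (hsuccpos η) hηo'
        have h2 : κ (α + Order.succ η) < κ (α + o) :=
          hmonoS _ _ hdomo (add_lt_add_right hηo' α)
        rw [h1.2] at h2
        have h3 := h2.trans (hκη.trans (add_lt_add_right (Order.lt_succ η) M))
        exact absurd h3 (lt_irrefl _)
  obtain ⟨hdomξ, hκξ⟩ := hP ξ hξ0 hξ
  refine ⟨hdomξ, ⟨M, hM, hκξ⟩, ?_⟩
  rw [hκξ]
  constructor
  · exact le1_refl hsys _
  · intro δ hδ
    by_contra hlt'
    push_neg at hlt'
    exact not_dvd_add_small hρ hξ0 hξ (le1_lt_dvd hsys hρ hδ hlt')
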